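/- Let d ≥ 2, 1 ≤ r ≤ d, and ρ_r = (1/r) Σ_{l=1}^r E_{ll}. Then for any k ∈ {1,…,d}: (i) for every index i with 1 ≤ i ≤ r, the diagonal-entry variance of the A block of the covariant-measurement least squares estimator satisfies d · ∫_{U(d)} ⟨e_k, U*ρ_r U e_k⟩ · ((d+1)|U_{ik}|² − 1 − 1/r)² dU = 2·((r+2)/r)·((d+1)/(d+2)) − (1 + 1/r)²; and (ii) if r ≥ 2, for all distinct indices i ≠ j with 1 ≤ i, j ≤ r, the corresponding covariance satisfies d · ∫_{U(d)} ⟨e_k, U*ρ_r U e_k⟩ · ((d+1)|U_{ik}|² − 1 − 1/r)((d+1)|U_{jk}|² − 1 − 1/r) dU = ((r+2)/r)·((d+1)/(d+2)) − (1 + 1/r)². -/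

import Mathlib

open MeasureTheory ProbabilityTheory Matrix
open scoped ComplexOrder

/-- The Borel (= product) σ-algebra on `d × d` complex matrices. -/
noncomputable instance matrixMeasurableSpace (d : ℕ) : MeasurableSpace (Matrix (Fin d) (Fin d) ℂ) :=
  MeasurableSpace.pi

/-- A density matrix: positive semidefinite with trace one. -/
def IsDensityMatrix {d : ℕ} (ρ : Matrix (Fin d) (Fin d) ℂ) : Prop :=
  ρ.PosSemidef ∧ ρ.trace = 1

/-- The rank-one projection `U E_{jj} U*`. -/
noncomputable def covProj (d : ℕ) (j : Fin d) (U : Matrix.unitaryGroup (Fin d) ℂ) :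
    Matrix (Fin d) (Fin d) ℂ :=
  (U : Matrix (Fin d) (Fin d) ℂ) * Matrix.single j j 1 *
    star (U : Matrix (Fin d) (Fin d) ℂ)

/-- The outcome law `μ_ρ` of the covariant measurement on the state `ρ`, built from the Haar
probability measure `μ` on the unitary group: the distribution of `U E_{JJ} U*` where `U ~ μ`
and, conditionally on `U`, `J = j` has probability `⟨e_j, U* ρ U e_j⟩`. -/
noncomputable def covariantLaw (d : ℕ) (μ : Measure (Matrix.unitaryGroup (Fin d) ℂ))
    (ρ : Matrix (Fin d) (Fin d) ℂ) : Measure (Matrix (Fin d) (Fin d) ℂ) :=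
  Measure.sum fun j : Fin d =>
    Measure.map (covProj d j)
      (μ.withDensity fun U =>
        ENNReal.ofReal
          ((star (U : Matrix (Fin d) (Fin d) ℂ) * ρ * (U : Matrix (Fin d) (Fin d) ℂ)) j j).re)

/-- The least squares estimator `ρ̂_LS = (1/N) Σ_i ((d+1) P_i - I)`. -/
noncomputable def lsEst {Ω : Type*} (d N : ℕ) (P : Fin N → Ω → Matrix (Fin d) (Fin d) ℂ)
    (ω : Ω) : Matrix (Fin d) (Fin d) ℂ :=
  (N : ℂ)⁻¹ • ∑ i, ((d + 1 : ℂ) • P i ω - 1)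

/-- Squared Frobenius norm `‖A‖₂² = Tr(A* A)`. -/
noncomputable def frobSq {d : ℕ} (A : Matrix (Fin d) (Fin d) ℂ) : ℝ :=
  (Matrix.trace (Aᴴ * A)).re

/-- Frobenius norm `‖A‖₂ = (Tr(A* A))^{1/2}`. -/
noncomputable def frobNorm {d : ℕ} (A : Matrix (Fin d) (Fin d) ℂ) : ℝ :=
  Real.sqrt (Matrix.trace (Aᴴ * A)).re

/-- Operator norm (largest singular value) of a matrix, as the `ℓ² → ℓ²` operator norm. -/
noncomputable def opNorm {d : ℕ} (A : Matrix (Fin d) (Fin d) ℂ) : ℝ :=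
  ‖LinearMap.toContinuousLinearMap (Matrix.toEuclideanLin A)‖

/-- Trace norm `‖A‖₁ = Tr|A|`: the sum of the singular values of `A`. -/
noncomputable def traceNorm {d : ℕ} (A : Matrix (Fin d) (Fin d) ℂ) : ℝ :=
  ∑ i, Real.sqrt ((Matrix.posSemidef_conjTranspose_mul_self A).1.eigenvalues i)

/-- The rank-`r` density matrix `ρ_r = (1/r) Σ_{i=1}^r E_{ii}`. -/
noncomputable def rhoR (d r : ℕ) : Matrix (Fin d) (Fin d) ℂ :=
  (r : ℂ)⁻¹ • ∑ i : Fin d, if (i : ℕ) < r then Matrix.single i i 1 else 0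

namespace CovAux
variable {d : ℕ}

abbrev UG (d : ℕ) := Matrix.unitaryGroup (Fin d) ℂ

noncomputable def uu (k a : Fin d) (U : UG d) : ℂ := (U : Matrix (Fin d) (Fin d) ℂ) a k
noncomputable def xx (k a : Fin d) (U : UG d) : ℝ := ‖uu k a U‖ ^ 2
noncomputable def zz (k a b : Fin d) (U : UG d) : ℝ := (uu k a U * (starRingEnd ℂ) (uu k b U)).re
noncomputable def zI (k a b : Fin d) (U : UG d) : ℝ := (uu k a U * (starRingEnd ℂ) (uu k b U)).im

lemma norm_sq_re_im (w : ℂ) : ‖w‖^2 = w.re*w.re + w.im*w.im := by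
  rw [Complex.sq_norm, Complex.normSq_apply]

lemma conj_mul_self_re (w : ℂ) : ((starRingEnd ℂ) w * w).re = ‖w‖^2 := by
  rw [norm_sq_re_im]; simp [Complex.mul_re]

lemma measEntry (a b : Fin d) : Measurable (fun A : Matrix (Fin d) (Fin d) ℂ => A a b) := by
  have h1 : Measurable (fun A : Matrix (Fin d) (Fin d) ℂ => A a) :=
    measurable_pi_apply (X := fun _ : Fin d => Fin d → ℂ) a
  exact (measurable_pi_apply (X := fun _ : Fin d => ℂ) b).comp h1

lemma meas_uu (k a : Fin d) : Measurable (uu k a) :=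
  (measEntry a k).comp measurable_subtype_coe

lemma meas_xx (k a : Fin d) : Measurable (xx k a) := ((meas_uu k a).norm).pow_const 2

lemma meas_zz (k a b : Fin d) : Measurable (zz k a b) :=
  Complex.measurable_re.comp ((meas_uu k a).mul ((Complex.continuous_conj.measurable).comp (meas_uu k b)))

lemma meas_zI (k a b : Fin d) : Measurable (zI k a b) :=
  Complex.measurable_im.comp ((meas_uu k a).mul ((Complex.continuous_conj.measurable).comp (meas_uu k b)))

lemma sum_xx (k : Fin d) (U : UG d) : ∑ a, xx k a U = 1 := by
  have hU : star (U : Matrix (Fin d) (Fin d) ℂ) * (U : Matrix (Fin d) (Fin d) ℂ) = 1 :=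
    Matrix.UnitaryGroup.star_mul_self U
  have h := congrFun (congrFun hU k) k
  rw [Matrix.mul_apply, Matrix.one_apply_eq] at h
  have h2 := congrArg Complex.re h
  rw [Complex.re_sum, Complex.one_re] at h2
  simp only [Matrix.star_apply, Matrix.conjTranspose_apply] at h2
  rw [← h2]
  exact Finset.sum_congr rfl fun a _ => (conj_mul_self_re _).symm

lemma xx_nonneg (k a : Fin d) (U : UG d) : 0 ≤ xx k a U := sq_nonneg _

lemma xx_le_one (k a : Fin d) (U : UG d) : xx k a U ≤ 1 := by
  have := sum_xx k U
  have h := Finset.single_le_sum (f := fun a => xx k a U) (fun b _ => xx_nonneg k b U) (Finset.mem_univ a)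
  linarith

lemma norm_uu_le_one (k a : Fin d) (U : UG d) : ‖uu k a U‖ ≤ 1 := by
  have h : ‖uu k a U‖^2 ≤ 1 := xx_le_one k a U
  nlinarith [norm_nonneg (uu k a U)]

lemma abs_zz_le_one (k a b : Fin d) (U : UG d) : |zz k a b U| ≤ 1 := by
  show |(uu k a U * (starRingEnd ℂ) (uu k b U)).re| ≤ 1
  have h1 := Complex.abs_re_le_norm (uu k a U * (starRingEnd ℂ) (uu k b U))
  have h2 : ‖uu k a U * (starRingEnd ℂ) (uu k b U)‖ = ‖uu k a U‖ * ‖uu k b U‖ := by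
    rw [norm_mul, RCLike.norm_conj]
  have := norm_uu_le_one k a U; have := norm_uu_le_one k b U
  have := norm_nonneg (uu k a U); have := norm_nonneg (uu k b U)
  nlinarith [abs_nonneg ((uu k a U * (starRingEnd ℂ) (uu k b U)).re)]

/-- a "nice" function : measurable and bounded by 1 -/
def Nice (f : UG d → ℝ) : Prop := Measurable f ∧ ∀ U, |f U| ≤ 1

lemma Nice.meas {f : UG d → ℝ} (h : Nice f) : Measurable f := h.1
lemma nice_one : Nice (fun _ : UG d => (1:ℝ)) := ⟨measurable_const, fun _ => by norm_num⟩
lemma nice_xx (k a : Fin d) : Nice (xx k a) :=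
  ⟨meas_xx k a, fun U => by rw [abs_of_nonneg (xx_nonneg k a U)]; exact xx_le_one k a U⟩
lemma nice_zz (k a b : Fin d) : Nice (zz k a b) := ⟨meas_zz k a b, abs_zz_le_one k a b⟩
lemma Nice.mul {f g : UG d → ℝ} (hf : Nice f) (hg : Nice g) : Nice (fun U => f U * g U) := by
  refine ⟨hf.1.mul hg.1, fun U => ?_⟩
  rw [abs_mul]
  have h1 := hf.2 U; have h2 := hg.2 U
  nlinarith [abs_nonneg (f U), abs_nonneg (g U)]

variable (μ : Measure (UG d)) [IsProbabilityMeasure μ]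

lemma Nice.integrable {f : UG d → ℝ} (h : Nice f) : Integrable f μ := by
  refine (integrable_const (1:ℝ)).mono' h.1.aestronglyMeasurable ?_
  exact Filter.Eventually.of_forall fun U => by simpa using h.2 U

lemma measMulLeft (V : UG d) : Measurable (fun U : UG d => V * U) := by
  have h : Measurable (fun U : UG d => ((V : Matrix (Fin d) (Fin d) ℂ) * (U : Matrix (Fin d) (Fin d) ℂ))) := by
    apply measurable_pi_lambda; intro a
    apply measurable_pi_lambda; intro b
    simp only [Matrix.mul_apply]
    exact Finset.measurable_sum _ (fun c _ =>
      (((measEntry c b).comp measurable_subtype_coe)).const_mul _)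
  exact Measurable.subtype_mk h

lemma int_inv (hμ : ∀ V : UG d, μ.map (fun U => V * U) = μ) (V : UG d) {f : UG d → ℝ} (hf : Measurable f) :
    ∫ U, f (V * U) ∂μ = ∫ U, f U ∂μ := by
  conv_rhs => rw [← hμ V]
  rw [integral_map (measMulLeft V).aemeasurable hf.aestronglyMeasurable]

lemma int_anti (hμ : ∀ V : UG d, μ.map (fun U => V * U) = μ) (V : UG d) {f : UG d → ℝ} (hf : Measurable f)
    (hodd : ∀ U, f (V * U) = - f U) : ∫ U, f U ∂μ = 0 := by
  have h := int_inv μ hμ V hf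
  simp only [hodd] at h
  rw [integral_neg] at h
  linarith



noncomputable def c0 : ℝ := (Real.sqrt 2)⁻¹

lemma c0_sq : c0 * c0 = 1/2 := by
  rw [c0, ← mul_inv]
  rw [Real.mul_self_sqrt (by norm_num)]
  norm_num

lemma conj_c0 : (starRingEnd ℂ) (c0 : ℂ) = (c0 : ℂ) := Complex.conj_ofReal _

lemma norm_neg_one : ‖(-1 : ℂ)‖ = 1 := by norm_num
lemma norm_I : ‖Complex.I‖ = 1 := by simp

noncomputable def diagU (b : Fin d) (ω : ℂ) (hω : ‖ω‖ = 1) : UG d :=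
  ⟨Matrix.diagonal (fun m => if m = b then ω else 1), by
    rw [Matrix.mem_unitaryGroup_iff', Matrix.star_eq_conjTranspose, Matrix.diagonal_conjTranspose,
      Matrix.diagonal_mul_diagonal]
    convert Matrix.diagonal_one with m
    by_cases hm : m = b
    · simp only [Pi.star_apply, hm, if_pos]
      rw [RCLike.star_def, mul_comm, Complex.mul_conj]
      rw [Complex.normSq_eq_norm_sq, hω]
      norm_num
    · simp [Pi.star_apply, hm]⟩

lemma uu_diagU (k a b : Fin d) (ω : ℂ) (hω : ‖ω‖ = 1) (U : UG d) :
    uu k a (diagU b ω hω * U) = (if a = b then ω else 1) * uu k a U := by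
  show ((diagU b ω hω * U : UG d) : Matrix (Fin d) (Fin d) ℂ) a k = _
  rw [Matrix.UnitaryGroup.mul_val]
  rw [show ((diagU b ω hω : UG d) : Matrix (Fin d) (Fin d) ℂ)
      = Matrix.diagonal (fun m => if m = b then ω else 1) from rfl]
  rw [Matrix.diagonal_mul]
  rfl

lemma xx_diagU (k l b : Fin d) (ω : ℂ) (hω : ‖ω‖ = 1) (U : UG d) :
    xx k l (diagU b ω hω * U) = xx k l U := by
  unfold xx
  rw [uu_diagU k l b ω hω U, norm_mul]
  by_cases hl : l = b <;> simp [hl, hω]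

lemma zz_diagU_neg (k a b : Fin d) (hab : a ≠ b) (U : UG d) :
    zz k a b (diagU b (-1) norm_neg_one * U) = - zz k a b U := by
  unfold zz
  rw [uu_diagU k a b _ _ U, uu_diagU k b b _ _ U, if_neg hab, if_pos rfl]
  simp

lemma zz_diagU_I (k a b : Fin d) (hab : a ≠ b) (U : UG d) :
    zz k a b (diagU b Complex.I norm_I * U) = zI k a b U := by
  unfold zz zI
  rw [uu_diagU k a b _ _ U, uu_diagU k b b _ _ U, if_neg hab, if_pos rfl]
  simp [Complex.mul_re, Complex.mul_im]
  ring

lemma zz_sq_add_zI_sq (k a b : Fin d) (U : UG d) :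
    zz k a b U ^ 2 + zI k a b U ^ 2 = xx k a U * xx k b U := by
  unfold zz zI xx
  rw [norm_sq_re_im, norm_sq_re_im]
  simp only [Complex.mul_re, Complex.mul_im, Complex.conj_re, Complex.conj_im]
  ring

noncomputable def rotM (a b : Fin d) : Matrix (Fin d) (Fin d) ℂ :=
  Matrix.of fun i j =>
    if i = a then (if j = a then (c0:ℂ) else if j = b then (c0:ℂ) else 0)
    else if i = b then (if j = a then -(c0:ℂ) else if j = b then (c0:ℂ) else 0)
    else if i = j then 1 else 0

lemma c0c0 : (c0:ℂ) * (c0:ℂ) = 1/2 := by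
  rw [← Complex.ofReal_mul, c0_sq]; norm_num

lemma rotM_real (a b : Fin d) (p q : Fin d) :
    (starRingEnd ℂ) (rotM a b p q) = rotM a b p q := by
  unfold rotM
  simp only [Matrix.of_apply]
  by_cases h1 : p = a <;> by_cases h2 : q = a <;> by_cases h3 : q = b <;> by_cases h4 : p = b <;>
    by_cases h5 : p = q <;>
      simp [h1, h2, h3, h4, h5, conj_c0] <;>
      (try split) <;> simp [conj_c0]

lemma rotM_mem {a b : Fin d} (hab : a ≠ b) : rotM a b ∈ Matrix.unitaryGroup (Fin d) ℂ := by
  rw [Matrix.mem_unitaryGroup_iff]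
  ext i j
  rw [Matrix.mul_apply]
  simp only [Matrix.star_apply, Matrix.conjTranspose_apply, rotM_real]
  by_cases hia : i = a
  · rw [hia]
    rw [Finset.sum_eq_add a b hab (fun c _ hc => by simp [rotM, hc.1, hc.2])
      (by simp) (by simp)]
    by_cases hja : j = a
    · rw [hja, Matrix.one_apply_eq]
      simp [rotM, Ne.symm hab]
      linear_combination 2 * c0c0
    · by_cases hjb : j = b
      · rw [hjb, Matrix.one_apply_ne hab]
        simp [rotM, Ne.symm hab, hab]
        try ring
      · rw [Matrix.one_apply_ne (show a ≠ j from fun h => hja h.symm)]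
        simp [rotM, hja, hjb, Ne.symm hab]
  · by_cases hib : i = b
    · rw [hib]
      rw [Finset.sum_eq_add a b hab (fun c _ hc => by simp [rotM, hc.1, hc.2, Ne.symm hab])
        (by simp) (by simp)]
      by_cases hja : j = a
      · rw [hja, Matrix.one_apply_ne (Ne.symm hab)]
        simp [rotM, Ne.symm hab, hab]
        try ring
      · by_cases hjb : j = b
        · rw [hjb, Matrix.one_apply_eq]
          simp [rotM, Ne.symm hab, hab]
          linear_combination 2 * c0c0
        · rw [Matrix.one_apply_ne (show b ≠ j from fun h => hjb h.symm)]
          simp [rotM, hja, hjb, Ne.symm hab, hab]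
    · rw [Finset.sum_eq_single i (fun c _ hc => by simp [rotM, hia, hib, Ne.symm hc])
        (by simp)]
      by_cases hja : j = a
      · rw [hja, Matrix.one_apply_ne hia]
        simp [rotM, hia, hib]
      · by_cases hjb : j = b
        · rw [hjb, Matrix.one_apply_ne hib]
          simp [rotM, hia, hib]
        · by_cases hij : i = j
          · rw [hij, Matrix.one_apply_eq]
            simp [rotM, hij ▸ hia, hij ▸ hib]
          · rw [Matrix.one_apply_ne hij]
            simp [rotM, hia, hib, hja, hjb, Ne.symm hij]

noncomputable def rotU (a b : Fin d) (hab : a ≠ b) : UG d := ⟨rotM a b, rotM_mem hab⟩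

lemma uu_rotU_a (k : Fin d) {a b : Fin d} (hab : a ≠ b) (U : UG d) :
    uu k a (rotU a b hab * U) = (c0:ℂ) * uu k a U + (c0:ℂ) * uu k b U := by
  show ((rotU a b hab * U : UG d) : Matrix (Fin d) (Fin d) ℂ) a k = _
  rw [Matrix.UnitaryGroup.mul_val, Matrix.mul_apply]
  rw [Finset.sum_eq_add a b hab
    (fun c _ hc => by simp [rotU, rotM, hc.1, hc.2])
    (by simp) (by simp)]
  simp [rotU, rotM, hab]
  rfl

lemma uu_rotU_b (k : Fin d) {a b : Fin d} (hab : a ≠ b) (U : UG d) :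
    uu k b (rotU a b hab * U) = -(c0:ℂ) * uu k a U + (c0:ℂ) * uu k b U := by
  show ((rotU a b hab * U : UG d) : Matrix (Fin d) (Fin d) ℂ) b k = _
  rw [Matrix.UnitaryGroup.mul_val, Matrix.mul_apply]
  rw [Finset.sum_eq_add a b hab
    (fun c _ hc => by simp [rotU, rotM, hc.1, hc.2, Ne.symm hab])
    (by simp) (by simp)]
  simp [rotU, rotM, hab, Ne.symm hab]
  rfl

lemma uu_rotU_o (k : Fin d) {a b l : Fin d} (hab : a ≠ b) (hla : l ≠ a) (hlb : l ≠ b) (U : UG d) :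
    uu k l (rotU a b hab * U) = uu k l U := by
  show ((rotU a b hab * U : UG d) : Matrix (Fin d) (Fin d) ℂ) l k = _
  rw [Matrix.UnitaryGroup.mul_val, Matrix.mul_apply]
  rw [Finset.sum_eq_single l
    (fun c _ hc => by simp [rotU, rotM, hla, hlb, Ne.symm hc])
    (by simp)]
  simp [rotU, rotM, hla, hlb]
  rfl

lemma xx_rotU_a (k : Fin d) {a b : Fin d} (hab : a ≠ b) (U : UG d) :
    xx k a (rotU a b hab * U) = (xx k a U + xx k b U)/2 + zz k a b U := by
  unfold xx zz
  rw [uu_rotU_a k hab U]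
  rw [norm_sq_re_im, norm_sq_re_im, norm_sq_re_im]
  simp only [Complex.add_re, Complex.add_im, Complex.mul_re, Complex.mul_im,
    Complex.ofReal_re, Complex.ofReal_im, Complex.conj_re, Complex.conj_im]
  linear_combination (((uu k a U).re + (uu k b U).re)^2 + ((uu k a U).im + (uu k b U).im)^2) * c0_sq

lemma xx_rotU_b (k : Fin d) {a b : Fin d} (hab : a ≠ b) (U : UG d) :
    xx k b (rotU a b hab * U) = (xx k a U + xx k b U)/2 - zz k a b U := by
  unfold xx zz
  rw [uu_rotU_b k hab U]
  rw [norm_sq_re_im, norm_sq_re_im, norm_sq_re_im]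
  simp only [Complex.add_re, Complex.add_im, Complex.mul_re, Complex.mul_im, Complex.neg_re,
    Complex.neg_im, Complex.ofReal_re, Complex.ofReal_im, Complex.conj_re, Complex.conj_im]
  linear_combination (((uu k b U).re - (uu k a U).re)^2 + ((uu k b U).im - (uu k a U).im)^2) * c0_sq

lemma xx_rotU_o (k : Fin d) {a b l : Fin d} (hab : a ≠ b) (hla : l ≠ a) (hlb : l ≠ b) (U : UG d) :
    xx k l (rotU a b hab * U) = xx k l U := by
  unfold xx
  rw [uu_rotU_o k hab hla hlb U]



section Integrals
variable (μ : Measure (UG d)) [IsProbabilityMeasure μ]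

lemma int_congr {f g : UG d → ℝ} (h : ∀ U, f U = g U) :
    ∫ U, f U ∂μ = ∫ U, g U ∂μ :=
  integral_congr_ae (Filter.Eventually.of_forall h)

lemma int_comb2 {f1 f2 : UG d → ℝ} (h1 : Nice f1) (h2 : Nice f2) (c1 c2 : ℝ) :
    ∫ U, (c1 * f1 U + c2 * f2 U) ∂μ = c1 * ∫ U, f1 U ∂μ + c2 * ∫ U, f2 U ∂μ := by
  rw [integral_add ((h1.integrable μ).const_mul c1) ((h2.integrable μ).const_mul c2),
    integral_const_mul, integral_const_mul]

lemma int_comb3 {f1 f2 f3 : UG d → ℝ} (h1 : Nice f1) (h2 : Nice f2) (h3 : Nice f3)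
    (c1 c2 c3 : ℝ) :
    ∫ U, (c1 * f1 U + c2 * f2 U + c3 * f3 U) ∂μ
      = c1 * ∫ U, f1 U ∂μ + c2 * ∫ U, f2 U ∂μ + c3 * ∫ U, f3 U ∂μ := by
  have hA : Integrable (fun U => c1 * f1 U + c2 * f2 U) μ :=
    ((h1.integrable μ).const_mul c1).add ((h2.integrable μ).const_mul c2)
  rw [integral_add hA ((h3.integrable μ).const_mul c3), int_comb2 μ h1 h2, integral_const_mul]

lemma int_comb4 {f1 f2 f3 f4 : UG d → ℝ} (h1 : Nice f1) (h2 : Nice f2) (h3 : Nice f3)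
    (h4 : Nice f4) (c1 c2 c3 c4 : ℝ) :
    ∫ U, (c1 * f1 U + c2 * f2 U + c3 * f3 U + c4 * f4 U) ∂μ
      = c1 * ∫ U, f1 U ∂μ + c2 * ∫ U, f2 U ∂μ + c3 * ∫ U, f3 U ∂μ + c4 * ∫ U, f4 U ∂μ := by
  have hA : Integrable (fun U => c1 * f1 U + c2 * f2 U + c3 * f3 U) μ :=
    (((h1.integrable μ).const_mul c1).add ((h2.integrable μ).const_mul c2)).add
      ((h3.integrable μ).const_mul c3)
  rw [integral_add hA ((h4.integrable μ).const_mul c4), int_comb3 μ h1 h2 h3, integral_const_mul]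

/-- integral of `z · h` vanishes when `h` is invariant under the sign flip. -/
lemma int_z_mul (hμ : ∀ V : UG d, μ.map (fun U => V * U) = μ) (k : Fin d) {a b : Fin d} (hab : a ≠ b) {h : UG d → ℝ} (hm : Measurable h)
    (hD : ∀ U, h (diagU b (-1) norm_neg_one * U) = h U) :
    ∫ U, zz k a b U * h U ∂μ = 0 := by
  apply int_anti μ hμ (diagU b (-1) norm_neg_one) ((meas_zz k a b).mul hm)
  intro U
  simp only [Pi.mul_apply]
  rw [zz_diagU_neg k a b hab U, hD U]
  ring

/-- integral of `z·(z·h)` equals half the integral of `x_a·(x_b·h)`. -/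
lemma int_z_sq (hμ : ∀ V : UG d, μ.map (fun U => V * U) = μ) (k : Fin d) {a b : Fin d} (hab : a ≠ b) {h : UG d → ℝ} (hh : Nice h)
    (hI : ∀ U, h (diagU b Complex.I norm_I * U) = h U) :
    ∫ U, zz k a b U * (zz k a b U * h U) ∂μ
      = (∫ U, xx k a U * (xx k b U * h U) ∂μ) / 2 := by
  have h1 := int_inv μ hμ (diagU b Complex.I norm_I)
    (f := fun U => zz k a b U * (zz k a b U * h U))
    ((meas_zz k a b).mul ((meas_zz k a b).mul hh.1))
  have h2 : ∀ U, zz k a b (diagU b Complex.I norm_I * U) *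
      (zz k a b (diagU b Complex.I norm_I * U) * h (diagU b Complex.I norm_I * U))
      = xx k a U * (xx k b U * h U) - zz k a b U * (zz k a b U * h U) := by
    intro U
    rw [zz_diagU_I k a b hab U, hI U]
    have h3 := zz_sq_add_zI_sq k a b U
    linear_combination h U * h3
  beta_reduce at h1
  rw [int_congr μ h2] at h1
  have h4 : Integrable (fun U => xx k a U * (xx k b U * h U)) μ :=
    (((nice_xx k a).mul ((nice_xx k b).mul hh))).integrable μ
  have h5 : Integrable (fun U => zz k a b U * (zz k a b U * h U)) μ :=
    (((nice_zz k a b).mul ((nice_zz k a b).mul hh))).integrable μ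
  rw [integral_sub h4 h5] at h1
  linarith



lemma int_comb5 {f1 f2 f3 f4 f5 : UG d → ℝ} (h1 : Nice f1) (h2 : Nice f2) (h3 : Nice f3)
    (h4 : Nice f4) (h5 : Nice f5) (c1 c2 c3 c4 c5 : ℝ) :
    ∫ U, (c1 * f1 U + c2 * f2 U + c3 * f3 U + c4 * f4 U + c5 * f5 U) ∂μ
      = c1 * ∫ U, f1 U ∂μ + c2 * ∫ U, f2 U ∂μ + c3 * ∫ U, f3 U ∂μ + c4 * ∫ U, f4 U ∂μ
        + c5 * ∫ U, f5 U ∂μ := by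
  have hA : Integrable (fun U => c1 * f1 U + c2 * f2 U + c3 * f3 U + c4 * f4 U) μ :=
    ((((h1.integrable μ).const_mul c1).add ((h2.integrable μ).const_mul c2)).add
      ((h3.integrable μ).const_mul c3)).add ((h4.integrable μ).const_mul c4)
  rw [integral_add hA ((h5.integrable μ).const_mul c5), int_comb4 μ h1 h2 h3 h4,
    integral_const_mul]

lemma nice_sab (k a b : Fin d) (hab : a ≠ b) :
    Nice (fun U : UG d => (xx k a U + xx k b U)/2) := by
  constructor
  · exact ((meas_xx k a).add (meas_xx k b)).div_const 2
  · intro U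
    have h1 := xx_nonneg k a U; have h2 := xx_nonneg k b U
    have h3 : xx k a U + xx k b U ≤ 1 := by
      have := sum_xx k U
      have h4 : ∑ m ∈ ({a, b} : Finset (Fin d)), xx k m U ≤ ∑ m, xx k m U :=
        Finset.sum_le_sum_of_subset_of_nonneg (Finset.subset_univ _)
          (fun m _ _ => xx_nonneg k m U)
      rw [Finset.sum_pair hab] at h4
      linarith
    rw [abs_le]; constructor <;> linarith

lemma rot_lin (hμ : ∀ V : UG d, μ.map (fun U => V * U) = μ)
    (k : Fin d) {a b : Fin d} (hab : a ≠ b) {g : UG d → ℝ} (hgN : Nice g)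
    (hgR : ∀ U, g (rotU a b hab * U) = g U)
    (hgD : ∀ U, g (diagU b (-1) norm_neg_one * U) = g U) :
    ∫ U, xx k a U * g U ∂μ = ∫ U, xx k b U * g U ∂μ := by
  have h1 := int_inv μ hμ (rotU a b hab) (f := fun U => xx k a U * g U)
    ((meas_xx k a).mul hgN.1)
  beta_reduce at h1
  have h2 : ∀ U, xx k a (rotU a b hab * U) * g (rotU a b hab * U)
      = (1/2) * (xx k a U * g U) + (1/2) * (xx k b U * g U) + 1 * (zz k a b U * g U) := by
    intro U; rw [xx_rotU_a k hab U, hgR U]; ring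
  rw [int_congr μ h2, int_comb3 μ ((nice_xx k a).mul hgN) ((nice_xx k b).mul hgN)
    ((nice_zz k a b).mul hgN), int_z_mul μ hμ k hab hgN.1 hgD] at h1
  linarith

lemma rot_sq (hμ : ∀ V : UG d, μ.map (fun U => V * U) = μ)
    (k : Fin d) {a b : Fin d} (hab : a ≠ b) {g : UG d → ℝ} (hgN : Nice g)
    (hgR : ∀ U, g (rotU a b hab * U) = g U)
    (hgD : ∀ U, g (diagU b (-1) norm_neg_one * U) = g U)
    (hgI : ∀ U, g (diagU b Complex.I norm_I * U) = g U) :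
    ∫ U, xx k a U * (xx k a U * g U) ∂μ = 2 * ∫ U, xx k a U * (xx k b U * g U) ∂μ := by
  have hsg : Measurable (fun U : UG d => (xx k a U + xx k b U)/2 * g U) :=
    (((meas_xx k a).add (meas_xx k b)).div_const 2).mul hgN.1
  have hDz : ∀ U, (fun U : UG d => (xx k a U + xx k b U)/2 * g U)
      (diagU b (-1) norm_neg_one * U) = (xx k a U + xx k b U)/2 * g U := by
    intro U; beta_reduce; rw [xx_diagU, xx_diagU, hgD U]
  have hz1 : ∫ U, zz k a b U * ((xx k a U + xx k b U)/2 * g U) ∂μ = 0 :=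
    int_z_mul μ hμ k hab hsg hDz
  have hz2 : ∫ U, zz k a b U * (zz k a b U * g U) ∂μ
      = (∫ U, xx k a U * (xx k b U * g U) ∂μ) / 2 := int_z_sq μ hμ k hab hgN hgI
  have nfa := (nice_xx k a).mul ((nice_xx k a).mul hgN)
  have nfb := (nice_xx k b).mul ((nice_xx k b).mul hgN)
  have nfc := (nice_xx k a).mul ((nice_xx k b).mul hgN)
  have nfz1 := (nice_zz k a b).mul ((nice_sab k a b hab).mul hgN)
  have nfz2 := (nice_zz k a b).mul ((nice_zz k a b).mul hgN)
  have e1 : ∫ U, xx k a U * (xx k a U * g U) ∂μ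
      = (1/4) * ∫ U, xx k a U * (xx k a U * g U) ∂μ
        + (1/2) * ∫ U, xx k a U * (xx k b U * g U) ∂μ
        + (1/4) * ∫ U, xx k b U * (xx k b U * g U) ∂μ
        + 2 * ∫ U, zz k a b U * ((xx k a U + xx k b U)/2 * g U) ∂μ
        + 1 * ∫ U, zz k a b U * (zz k a b U * g U) ∂μ := by
    have h1 := int_inv μ hμ (rotU a b hab) (f := fun U => xx k a U * (xx k a U * g U))
      ((meas_xx k a).mul ((meas_xx k a).mul hgN.1))
    beta_reduce at h1
    have h2 : ∀ U, xx k a (rotU a b hab * U) *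
        (xx k a (rotU a b hab * U) * g (rotU a b hab * U))
        = (1/4) * (xx k a U * (xx k a U * g U)) + (1/2) * (xx k a U * (xx k b U * g U))
          + (1/4) * (xx k b U * (xx k b U * g U))
          + 2 * (zz k a b U * ((xx k a U + xx k b U)/2 * g U))
          + 1 * (zz k a b U * (zz k a b U * g U)) := by
      intro U; rw [xx_rotU_a k hab U, hgR U]; ring
    rw [int_congr μ h2, int_comb5 μ nfa nfc nfb nfz1 nfz2] at h1
    linarith
  have e2 : ∫ U, xx k b U * (xx k b U * g U) ∂μ
      = (1/4) * ∫ U, xx k a U * (xx k a U * g U) ∂μ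
        + (1/2) * ∫ U, xx k a U * (xx k b U * g U) ∂μ
        + (1/4) * ∫ U, xx k b U * (xx k b U * g U) ∂μ
        + (-2) * ∫ U, zz k a b U * ((xx k a U + xx k b U)/2 * g U) ∂μ
        + 1 * ∫ U, zz k a b U * (zz k a b U * g U) ∂μ := by
    have h1 := int_inv μ hμ (rotU a b hab) (f := fun U => xx k b U * (xx k b U * g U))
      ((meas_xx k b).mul ((meas_xx k b).mul hgN.1))
    beta_reduce at h1
    have h2 : ∀ U, xx k b (rotU a b hab * U) *
        (xx k b (rotU a b hab * U) * g (rotU a b hab * U))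
        = (1/4) * (xx k a U * (xx k a U * g U)) + (1/2) * (xx k a U * (xx k b U * g U))
          + (1/4) * (xx k b U * (xx k b U * g U))
          + (-2) * (zz k a b U * ((xx k a U + xx k b U)/2 * g U))
          + 1 * (zz k a b U * (zz k a b U * g U)) := by
      intro U; rw [xx_rotU_b k hab U, hgR U]; ring
    rw [int_congr μ h2, int_comb5 μ nfa nfc nfb nfz1 nfz2] at h1
    linarith
  rw [hz1, hz2] at e1 e2
  linarith

lemma rot_cube (hμ : ∀ V : UG d, μ.map (fun U => V * U) = μ)
    (k : Fin d) {a b : Fin d} (hab : a ≠ b) :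
    ∫ U, xx k a U * (xx k a U * xx k a U) ∂μ
      = 3 * ∫ U, xx k a U * (xx k a U * xx k b U) ∂μ := by
  set sab : UG d → ℝ := fun U => (xx k a U + xx k b U)/2 with hsab
  have nsab := nice_sab k a b hab
  have hsm : Measurable sab := nsab.1
  have hsD : ∀ U, sab (diagU b (-1) norm_neg_one * U) = sab U := by
    intro U; simp only [hsab]; rw [xx_diagU, xx_diagU]
  have hsI : ∀ U, sab (diagU b Complex.I norm_I * U) = sab U := by
    intro U; simp only [hsab]; rw [xx_diagU, xx_diagU]
  have nf1 := nsab.mul (nsab.mul nsab)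
  have nf2 := (nice_zz k a b).mul (nsab.mul nsab)
  have nf3 := (nice_zz k a b).mul ((nice_zz k a b).mul nsab)
  have nf4 := (nice_zz k a b).mul ((nice_zz k a b).mul (nice_zz k a b))
  have hz2 : ∫ U, zz k a b U * (sab U * sab U) ∂μ = 0 :=
    int_z_mul μ hμ k hab (hsm.mul hsm) (fun U => by
      show sab _ * sab _ = _
      rw [hsD U])
  have hz4 : ∫ U, zz k a b U * (zz k a b U * zz k a b U) ∂μ = 0 := by
    apply int_z_mul μ hμ k hab ((meas_zz k a b).mul (meas_zz k a b))
    intro U; simp only [Pi.mul_apply]; rw [zz_diagU_neg k a b hab U]; ring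
  have hz3 : ∫ U, zz k a b U * (zz k a b U * sab U) ∂μ
      = (∫ U, xx k a U * (xx k b U * sab U) ∂μ) / 2 :=
    int_z_sq μ hμ k hab nsab hsI
  -- expansion equations
  have mkeq : ∀ (l m n : Fin d) (c2 c3 c4 : ℝ),
      (∀ U, xx k l (rotU a b hab * U) * (xx k m (rotU a b hab * U) * xx k n (rotU a b hab * U))
        = 1 * (sab U * (sab U * sab U)) + c2 * (zz k a b U * (sab U * sab U))
          + c3 * (zz k a b U * (zz k a b U * sab U))
          + c4 * (zz k a b U * (zz k a b U * zz k a b U))) →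
      ∫ U, xx k l U * (xx k m U * xx k n U) ∂μ
        = ∫ U, sab U * (sab U * sab U) ∂μ
          + c3 * ((∫ U, xx k a U * (xx k b U * sab U) ∂μ) / 2) := by
    intro l m n c2 c3 c4 hpt
    have h1 := int_inv μ hμ (rotU a b hab)
      (f := fun U => xx k l U * (xx k m U * xx k n U))
      ((meas_xx k l).mul ((meas_xx k m).mul (meas_xx k n)))
    beta_reduce at h1
    rw [int_congr μ hpt, int_comb4 μ nf1 nf2 nf3 nf4, hz2, hz4, hz3] at h1
    rw [← h1]; ring
  have eA := mkeq a a a 3 3 1 (fun U => by rw [xx_rotU_a k hab U]; simp only [hsab]; ring)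
  have eB := mkeq b b b (-3) 3 (-1) (fun U => by rw [xx_rotU_b k hab U]; simp only [hsab]; ring)
  have eT := mkeq a a b 1 (-1) (-1) (fun U => by
    rw [xx_rotU_a k hab U, xx_rotU_b k hab U]; simp only [hsab]; ring)
  have eT' := mkeq a b b (-1) (-1) 1 (fun U => by
    rw [xx_rotU_a k hab U, xx_rotU_b k hab U]; simp only [hsab]; ring)
  -- decompose S3 and W
  have eS3 : ∫ U, sab U * (sab U * sab U) ∂μ
      = (1/8) * ∫ U, xx k a U * (xx k a U * xx k a U) ∂μ
        + (3/8) * ∫ U, xx k a U * (xx k a U * xx k b U) ∂μ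
        + (3/8) * ∫ U, xx k a U * (xx k b U * xx k b U) ∂μ
        + (1/8) * ∫ U, xx k b U * (xx k b U * xx k b U) ∂μ := by
    rw [← int_comb4 μ ((nice_xx k a).mul ((nice_xx k a).mul (nice_xx k a)))
      ((nice_xx k a).mul ((nice_xx k a).mul (nice_xx k b)))
      ((nice_xx k a).mul ((nice_xx k b).mul (nice_xx k b)))
      ((nice_xx k b).mul ((nice_xx k b).mul (nice_xx k b)))]
    apply int_congr μ; intro U; simp only [hsab]; ring
  have eW : ∫ U, xx k a U * (xx k b U * sab U) ∂μ
      = (1/2) * ∫ U, xx k a U * (xx k a U * xx k b U) ∂μ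
        + (1/2) * ∫ U, xx k a U * (xx k b U * xx k b U) ∂μ := by
    rw [← int_comb2 μ ((nice_xx k a).mul ((nice_xx k a).mul (nice_xx k b)))
      ((nice_xx k a).mul ((nice_xx k b).mul (nice_xx k b)))]
    apply int_congr μ; intro U; simp only [hsab]; ring
  linarith



lemma int_sum_one (k : Fin d) : ∑ c, ∫ U, xx k c U ∂μ = 1 := by
  rw [← integral_finset_sum Finset.univ (fun c _ => (nice_xx k c).integrable μ)]
  rw [int_congr μ (g := fun _ => (1:ℝ)) (fun U => sum_xx k U)]
  simp

lemma int_sum_mul (k : Fin d) {h : UG d → ℝ} (hh : Nice h) :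
    ∑ c, ∫ U, h U * xx k c U ∂μ = ∫ U, h U ∂μ := by
  rw [← integral_finset_sum Finset.univ (fun c _ => (hh.mul (nice_xx k c)).integrable μ)]
  apply int_congr μ
  intro U
  rw [← Finset.mul_sum, sum_xx, mul_one]

lemma exists_ne' (hd : 2 ≤ d) (a : Fin d) : ∃ b : Fin d, b ≠ a :=
  Fintype.exists_ne_of_one_lt_card (by rw [Fintype.card_fin]; omega) a

lemma int_x (hμ : ∀ V : UG d, μ.map (fun U => V * U) = μ) (hd : 2 ≤ d) (k a : Fin d) :
    ∫ U, xx k a U ∂μ = 1/(d:ℝ) := by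
  have key : ∀ c : Fin d, ∫ U, xx k c U ∂μ = ∫ U, xx k a U ∂μ := by
    intro c
    by_cases hca : c = a
    · rw [hca]
    · have h := rot_lin μ hμ k (hab := hca) (g := fun _ => (1:ℝ)) nice_one
        (fun _ => rfl) (fun _ => rfl)
      have h1 : ∫ U, xx k c U * 1 ∂μ = ∫ U, xx k c U ∂μ :=
        int_congr μ (fun U => mul_one _)
      have h2 : ∫ U, xx k a U * 1 ∂μ = ∫ U, xx k a U ∂μ :=
        int_congr μ (fun U => mul_one _)
      rw [h1, h2] at h
      exact h
  have hs := int_sum_one μ k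
  rw [Finset.sum_congr rfl (fun c _ => key c), Finset.sum_const, Finset.card_univ,
    Fintype.card_fin, nsmul_eq_mul] at hs
  have hd0 : (0:ℝ) < d := by
    have : 0 < d := by omega
    exact_mod_cast this
  rw [eq_div_iff hd0.ne']
  linarith

lemma int_xx_off (hμ : ∀ V : UG d, μ.map (fun U => V * U) = μ) (hd : 2 ≤ d)
    (k : Fin d) {a b : Fin d} (hab : a ≠ b) :
    ∫ U, xx k a U * xx k b U ∂μ = 1/((d:ℝ)*((d:ℝ)+1)) := by
  have hsum := int_sum_mul μ k (nice_xx k a)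
  rw [int_x μ hμ hd k a] at hsum
  have key : ∀ c : Fin d, c ≠ a → ∫ U, xx k a U * xx k c U ∂μ
      = ∫ U, xx k a U * xx k b U ∂μ := by
    intro c hca
    by_cases hcb : c = b
    · rw [hcb]
    · have hbc : b ≠ c := fun h => hcb h.symm
      have h := rot_lin μ hμ k (hab := hbc) (g := xx k a) (nice_xx k a)
        (fun U => xx_rotU_o k hbc hab (fun h => hca h.symm) U)
        (fun U => xx_diagU k a c _ _ U)
      have h1 : ∫ U, xx k b U * xx k a U ∂μ = ∫ U, xx k a U * xx k b U ∂μ :=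
        int_congr μ (fun U => mul_comm _ _)
      have h2 : ∫ U, xx k c U * xx k a U ∂μ = ∫ U, xx k a U * xx k c U ∂μ :=
        int_congr μ (fun U => mul_comm _ _)
      rw [h1, h2] at h
      exact h.symm
  have keyaa : ∫ U, xx k a U * xx k a U ∂μ = 2 * ∫ U, xx k a U * xx k b U ∂μ := by
    have h := rot_sq μ hμ k (hab := hab) (g := fun _ => (1:ℝ)) nice_one
      (fun _ => rfl) (fun _ => rfl) (fun _ => rfl)
    have h1 : ∫ U, xx k a U * (xx k a U * 1) ∂μ = ∫ U, xx k a U * xx k a U ∂μ :=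
      int_congr μ (fun U => by ring)
    have h2 : ∫ U, xx k a U * (xx k b U * 1) ∂μ = ∫ U, xx k a U * xx k b U ∂μ :=
      int_congr μ (fun U => by ring)
    rw [h1, h2] at h
    exact h
  rw [← Finset.add_sum_erase _ _ (Finset.mem_univ a)] at hsum
  rw [Finset.sum_congr rfl (fun c hc => key c (Finset.ne_of_mem_erase hc)),
    Finset.sum_const, Finset.card_erase_of_mem (Finset.mem_univ a), Finset.card_univ,
    Fintype.card_fin, nsmul_eq_mul, keyaa] at hsum
  have hd0 : (0:ℝ) < d := by
    have : 0 < d := by omega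
    exact_mod_cast this
  have hcast : ((d - 1 : ℕ) : ℝ) = (d:ℝ) - 1 := by
    rw [Nat.cast_sub (by omega)]
    simp
  rw [hcast] at hsum
  rw [eq_div_iff (by positivity)]
  have h2 : ((d:ℝ) + 1) * ∫ U, xx k a U * xx k b U ∂μ = 1/(d:ℝ) := by linarith
  calc (∫ U, xx k a U * xx k b U ∂μ) * ((d:ℝ)*((d:ℝ)+1))
      = ((d:ℝ) + 1) * (∫ U, xx k a U * xx k b U ∂μ) * (d:ℝ) := by ring
    _ = 1/(d:ℝ) * (d:ℝ) := by rw [← h2]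
    _ = 1 := by field_simp


lemma int_xx_diag (hμ : ∀ V : UG d, μ.map (fun U => V * U) = μ) (hd : 2 ≤ d) (k a : Fin d) :
    ∫ U, xx k a U * xx k a U ∂μ = 2/((d:ℝ)*((d:ℝ)+1)) := by
  obtain ⟨b, hb⟩ := exists_ne' hd a
  have hab : a ≠ b := Ne.symm hb
  have h := rot_sq μ hμ k (hab := hab) (g := fun _ => (1:ℝ)) nice_one
    (fun _ => rfl) (fun _ => rfl) (fun _ => rfl)
  have h1 : ∫ U, xx k a U * (xx k a U * 1) ∂μ = ∫ U, xx k a U * xx k a U ∂μ :=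
    int_congr μ (fun U => by ring)
  have h2 : ∫ U, xx k a U * (xx k b U * 1) ∂μ = ∫ U, xx k a U * xx k b U ∂μ :=
    int_congr μ (fun U => by ring)
  rw [h1, h2, int_xx_off μ hμ hd k hab] at h
  rw [h]
  ring

lemma int_x3_aab (hμ : ∀ V : UG d, μ.map (fun U => V * U) = μ) (hd : 2 ≤ d)
    (k : Fin d) {a b : Fin d} (hab : a ≠ b) :
    ∫ U, xx k a U * (xx k a U * xx k b U) ∂μ = 2/((d:ℝ)*((d:ℝ)+1)*((d:ℝ)+2)) := by
  have hsum := int_sum_mul μ k (h := fun U => xx k a U * xx k a U)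
    ((nice_xx k a).mul (nice_xx k a))
  rw [int_xx_diag μ hμ hd k a] at hsum
  have key : ∀ c : Fin d, c ≠ a → ∫ U, (xx k a U * xx k a U) * xx k c U ∂μ
      = ∫ U, xx k a U * (xx k a U * xx k b U) ∂μ := by
    intro c hca
    by_cases hcb : c = b
    · rw [hcb]
      exact int_congr μ (fun U => by ring)
    · have hbc : b ≠ c := fun h => hcb h.symm
      have h := rot_lin μ hμ k (hab := hbc) (g := fun U => xx k a U * xx k a U)
        ((nice_xx k a).mul (nice_xx k a))
        (fun U => by
          show xx k a _ * xx k a _ = _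
          rw [xx_rotU_o k hbc hab (fun h => hca h.symm) U])
        (fun U => by
          show xx k a _ * xx k a _ = _
          rw [xx_diagU k a c _ _ U])
      have h1 : ∫ U, xx k b U * (xx k a U * xx k a U) ∂μ
          = ∫ U, xx k a U * (xx k a U * xx k b U) ∂μ := int_congr μ (fun U => by ring)
      have h2 : ∫ U, xx k c U * (xx k a U * xx k a U) ∂μ
          = ∫ U, (xx k a U * xx k a U) * xx k c U ∂μ := int_congr μ (fun U => by ring)
      rw [h1, h2] at h
      exact h.symm
  have keyaaa : ∫ U, (xx k a U * xx k a U) * xx k a U ∂μ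
      = 3 * ∫ U, xx k a U * (xx k a U * xx k b U) ∂μ := by
    have h := rot_cube μ hμ k hab
    have h1 : ∫ U, xx k a U * (xx k a U * xx k a U) ∂μ
        = ∫ U, (xx k a U * xx k a U) * xx k a U ∂μ := int_congr μ (fun U => by ring)
    rw [h1] at h
    exact h
  rw [← Finset.add_sum_erase _ _ (Finset.mem_univ a)] at hsum
  rw [Finset.sum_congr rfl (fun c hc => key c (Finset.ne_of_mem_erase hc)),
    Finset.sum_const, Finset.card_erase_of_mem (Finset.mem_univ a), Finset.card_univ,
    Fintype.card_fin, nsmul_eq_mul, keyaaa] at hsum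
  have hcast : ((d - 1 : ℕ) : ℝ) = (d:ℝ) - 1 := by
    rw [Nat.cast_sub (by omega)]
    simp
  rw [hcast] at hsum
  have hd0 : (0:ℝ) < d := by
    have : 0 < d := by omega
    exact_mod_cast this
  have h2 : ((d:ℝ) + 2) * ∫ U, xx k a U * (xx k a U * xx k b U) ∂μ
      = 2/((d:ℝ)*((d:ℝ)+1)) := by linarith
  rw [eq_div_iff (by positivity)]
  calc (∫ U, xx k a U * (xx k a U * xx k b U) ∂μ) * ((d:ℝ)*((d:ℝ)+1)*((d:ℝ)+2))
      = (((d:ℝ)+2) * ∫ U, xx k a U * (xx k a U * xx k b U) ∂μ) * ((d:ℝ)*((d:ℝ)+1)) := by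
        ring
    _ = 2/((d:ℝ)*((d:ℝ)+1)) * ((d:ℝ)*((d:ℝ)+1)) := by rw [h2]
    _ = 2 := by field_simp

lemma int_x3_aaa (hμ : ∀ V : UG d, μ.map (fun U => V * U) = μ) (hd : 2 ≤ d) (k a : Fin d) :
    ∫ U, xx k a U * (xx k a U * xx k a U) ∂μ = 6/((d:ℝ)*((d:ℝ)+1)*((d:ℝ)+2)) := by
  obtain ⟨b, hb⟩ := exists_ne' hd a
  have hab : a ≠ b := Ne.symm hb
  rw [rot_cube μ hμ k hab, int_x3_aab μ hμ hd k hab]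
  ring

lemma int_x3_abc (hμ : ∀ V : UG d, μ.map (fun U => V * U) = μ) (hd : 2 ≤ d)
    (k : Fin d) {a b c : Fin d} (hab : a ≠ b) (hac : a ≠ c) (hbc : b ≠ c) :
    ∫ U, xx k a U * (xx k b U * xx k c U) ∂μ = 1/((d:ℝ)*((d:ℝ)+1)*((d:ℝ)+2)) := by
  have h := rot_sq μ hμ k (hab := hab) (g := xx k c) (nice_xx k c)
    (fun U => xx_rotU_o k hab (Ne.symm hac) (Ne.symm hbc) U)
    (fun U => xx_diagU k c b _ _ U)
    (fun U => xx_diagU k c b _ _ U)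
  rw [int_x3_aab μ hμ hd k hac] at h
  have hd0 : (0:ℝ) < d := by
    have : 0 < d := by omega
    exact_mod_cast this
  have : 2 * ∫ U, xx k a U * (xx k b U * xx k c U) ∂μ
      = 2 * (1/((d:ℝ)*((d:ℝ)+1)*((d:ℝ)+2))) := by
    rw [← h]; ring
  linarith



lemma rho_re (r : ℕ) (k : Fin d) (U : UG d) :
    ((star (U : Matrix (Fin d) (Fin d) ℂ) * rhoR d r * (U : Matrix (Fin d) (Fin d) ℂ)) k k).re
      = (r:ℝ)⁻¹ * ∑ l : Fin d, (if (l:ℕ) < r then xx k l U else 0) := by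
  set A := (U : Matrix (Fin d) (Fin d) ℂ) with hA
  have key : ∀ l : Fin d, (star A * Matrix.single l l (1:ℂ) * A) k k
      = (starRingEnd ℂ) (A l k) * A l k := by
    intro l
    rw [Matrix.mul_apply]
    rw [Finset.sum_eq_single l (fun n _ hn => by simp [hn]) (by simp)]
    rw [Matrix.mul_single_apply_same, mul_one, Matrix.star_apply]
    rfl
  have h1 : star A * rhoR d r * A
      = (r:ℂ)⁻¹ • ∑ l : Fin d,
          (if (l:ℕ) < r then star A * Matrix.single l l (1:ℂ) * A else 0) := by
    rw [rhoR, Matrix.mul_smul, Matrix.smul_mul, Matrix.mul_sum, Matrix.sum_mul]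
    congr 1
    refine Finset.sum_congr rfl fun l _ => ?_
    split_ifs
    · rfl
    · simp
  rw [h1, Matrix.smul_apply, Matrix.sum_apply]
  have h2 : ∀ l ∈ (Finset.univ : Finset (Fin d)),
      (if (l:ℕ) < r then star A * Matrix.single l l (1:ℂ) * A else 0) k k
      = if (l:ℕ) < r then (starRingEnd ℂ) (A l k) * A l k else 0 := by
    intro l _
    split_ifs
    · rw [key l]
    · rfl
  rw [Finset.sum_congr rfl h2]
  have h3 : ((r:ℕ):ℂ)⁻¹ = (((r:ℝ)⁻¹ : ℝ) : ℂ) := by push_cast; ring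
  rw [smul_eq_mul, h3, Complex.re_ofReal_mul, Complex.re_sum]
  congr 1
  refine Finset.sum_congr rfl fun l _ => ?_
  split_ifs
  · rw [conj_mul_self_re]
    rfl
  · rfl

lemma card_filter_lt {r : ℕ} (hrd : r ≤ d) :
    (Finset.univ.filter (fun l : Fin d => (l:ℕ) < r)).card = r := by
  have hset : Finset.univ.filter (fun l : Fin d => (l:ℕ) < r)
      = Finset.map (Fin.castLEEmb hrd) Finset.univ := by
    ext l
    simp only [Finset.mem_filter, Finset.mem_univ, true_and, Finset.mem_map]
    constructor
    · intro h
      exact ⟨⟨l.1, h⟩, by ext; simp⟩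
    · rintro ⟨m, rfl⟩
      simpa using m.2
  rw [hset, Finset.card_map, Finset.card_univ, Fintype.card_fin]


lemma final_int1 (hμ : ∀ V : UG d, μ.map (fun U => V * U) = μ) (hd : 2 ≤ d) {r : ℕ}
    (hr : 1 ≤ r) (hrd : r ≤ d) (k i : Fin d) (hi : (i:ℕ) < r) :
    (d:ℝ) * ∫ U, ((r:ℝ)⁻¹ * ∑ l : Fin d, (if (l:ℕ) < r then xx k l U else 0)) *
        (((d:ℝ)+1) * xx k i U - 1 - 1/(r:ℝ))^2 ∂μ
      = 2 * (((r:ℝ) + 2) / (r:ℝ)) * (((d:ℝ) + 1) / ((d:ℝ) + 2)) - (1 + 1 / (r:ℝ))^2 := by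
  have hd0 : (0:ℝ) < d := by exact_mod_cast (by omega : 0 < d)
  have hr0 : (0:ℝ) < r := by exact_mod_cast (by omega : 0 < r)
  set B : ℝ := -(1 + 1/(r:ℝ)) with hB
  set F : Fin d → UG d → ℝ := fun l U => (r:ℝ)⁻¹ *
    (((d:ℝ)+1)^2 * (xx k l U * (xx k i U * xx k i U))
      + (2*((d:ℝ)+1)*B) * (xx k l U * xx k i U) + B^2 * xx k l U) with hF
  have hpt : ∀ U, ((r:ℝ)⁻¹ * ∑ l : Fin d, (if (l:ℕ) < r then xx k l U else 0)) *
      (((d:ℝ)+1) * xx k i U - 1 - 1/(r:ℝ))^2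
      = ∑ l : Fin d, (if (l:ℕ) < r then F l U else 0) := by
    intro U
    rw [Finset.mul_sum, Finset.sum_mul]
    refine Finset.sum_congr rfl fun l _ => ?_
    split_ifs with h
    · simp only [hF, hB]; ring
    · simp
  have hbase : ∀ l : Fin d, Integrable (fun U => F l U) μ := by
    intro l
    have h1 : Integrable (fun U => ((d:ℝ)+1)^2 * (xx k l U * (xx k i U * xx k i U))
        + (2*((d:ℝ)+1)*B) * (xx k l U * xx k i U) + B^2 * xx k l U) μ :=
      ((((((nice_xx k l).mul ((nice_xx k i).mul (nice_xx k i))).integrable μ).const_mul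
        _).add ((((nice_xx k l).mul (nice_xx k i)).integrable μ).const_mul _)).add
        (((nice_xx k l).integrable μ).const_mul _))
    exact h1.const_mul _
  have hintl : ∀ l ∈ (Finset.univ : Finset (Fin d)),
      Integrable (fun U => if (l:ℕ) < r then F l U else 0) μ := by
    intro l _
    by_cases h : (l:ℕ) < r
    · simp only [if_pos h]; exact hbase l
    · simp only [if_neg h]; exact integrable_zero _ _ _
  rw [int_congr μ hpt, integral_finset_sum Finset.univ hintl]
  have hpull : ∀ l ∈ (Finset.univ : Finset (Fin d)),
      ∫ U, (if (l:ℕ) < r then F l U else 0) ∂μ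
        = if (l:ℕ) < r then ∫ U, F l U ∂μ else 0 := by
    intro l _
    by_cases h : (l:ℕ) < r
    · simp only [if_pos h]
    · simp only [if_neg h, integral_zero]
  rw [Finset.sum_congr rfl hpull, ← Finset.sum_filter]
  have hVi : ∫ U, F i U ∂μ = (r:ℝ)⁻¹ *
      (((d:ℝ)+1)^2 * (6/((d:ℝ)*((d:ℝ)+1)*((d:ℝ)+2)))
        + (2*((d:ℝ)+1)*B) * (2/((d:ℝ)*((d:ℝ)+1))) + B^2 * (1/(d:ℝ))) := by
    simp only [hF]
    rw [integral_const_mul, int_comb3 μ ((nice_xx k i).mul ((nice_xx k i).mul (nice_xx k i)))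
      ((nice_xx k i).mul (nice_xx k i)) (nice_xx k i),
      int_x3_aaa μ hμ hd k i, int_xx_diag μ hμ hd k i, int_x μ hμ hd k i]
  have hVo : ∀ l : Fin d, l ≠ i → ∫ U, F l U ∂μ = (r:ℝ)⁻¹ *
      (((d:ℝ)+1)^2 * (2/((d:ℝ)*((d:ℝ)+1)*((d:ℝ)+2)))
        + (2*((d:ℝ)+1)*B) * (1/((d:ℝ)*((d:ℝ)+1))) + B^2 * (1/(d:ℝ))) := by
    intro l hl
    simp only [hF]
    rw [integral_const_mul, int_comb3 μ ((nice_xx k l).mul ((nice_xx k i).mul (nice_xx k i)))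
      ((nice_xx k l).mul (nice_xx k i)) (nice_xx k l)]
    rw [int_congr μ (g := fun U => xx k i U * (xx k i U * xx k l U)) (fun U => by ring),
      int_x3_aab μ hμ hd k (Ne.symm hl), int_xx_off μ hμ hd k hl, int_x μ hμ hd k l]
  have hiS : i ∈ Finset.univ.filter (fun l : Fin d => (l:ℕ) < r) :=
    Finset.mem_filter.mpr ⟨Finset.mem_univ _, hi⟩
  rw [← Finset.add_sum_erase _ _ hiS, hVi,
    Finset.sum_congr rfl (fun l hl => hVo l (Finset.mem_erase.mp hl).1),
    Finset.sum_const, Finset.card_erase_of_mem hiS, card_filter_lt hrd, nsmul_eq_mul]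
  have hcast : ((r - 1 : ℕ) : ℝ) = (r:ℝ) - 1 := by
    rw [Nat.cast_sub (by omega)]; simp
  rw [hcast, hB]
  have h2 : (d:ℝ) + 2 ≠ 0 := by positivity
  have h1 : (d:ℝ) + 1 ≠ 0 := by positivity
  field_simp
  ring

lemma final_int2 (hμ : ∀ V : UG d, μ.map (fun U => V * U) = μ) (hd : 2 ≤ d) {r : ℕ}
    (hr : 2 ≤ r) (hrd : r ≤ d) (k i j : Fin d) (hij : i ≠ j) (hi : (i:ℕ) < r)
    (hj : (j:ℕ) < r) :
    (d:ℝ) * ∫ U, ((r:ℝ)⁻¹ * ∑ l : Fin d, (if (l:ℕ) < r then xx k l U else 0)) *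
        ((((d:ℝ)+1) * xx k i U - 1 - 1/(r:ℝ)) * (((d:ℝ)+1) * xx k j U - 1 - 1/(r:ℝ))) ∂μ
      = (((r:ℝ) + 2) / (r:ℝ)) * (((d:ℝ) + 1) / ((d:ℝ) + 2)) - (1 + 1 / (r:ℝ))^2 := by
  have hd0 : (0:ℝ) < d := by exact_mod_cast (by omega : 0 < d)
  have hr0 : (0:ℝ) < r := by exact_mod_cast (by omega : 0 < r)
  set B : ℝ := -(1 + 1/(r:ℝ)) with hB
  set F : Fin d → UG d → ℝ := fun l U => (r:ℝ)⁻¹ *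
    (((d:ℝ)+1)^2 * (xx k l U * (xx k i U * xx k j U))
      + (((d:ℝ)+1)*B) * (xx k l U * xx k i U)
      + (((d:ℝ)+1)*B) * (xx k l U * xx k j U) + B^2 * xx k l U) with hF
  have hpt : ∀ U, ((r:ℝ)⁻¹ * ∑ l : Fin d, (if (l:ℕ) < r then xx k l U else 0)) *
      ((((d:ℝ)+1) * xx k i U - 1 - 1/(r:ℝ)) * (((d:ℝ)+1) * xx k j U - 1 - 1/(r:ℝ)))
      = ∑ l : Fin d, (if (l:ℕ) < r then F l U else 0) := by
    intro U
    rw [Finset.mul_sum, Finset.sum_mul]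
    refine Finset.sum_congr rfl fun l _ => ?_
    split_ifs with h
    · simp only [hF, hB]; ring
    · simp
  have hbase : ∀ l : Fin d, Integrable (fun U => F l U) μ := by
    intro l
    have hA : Integrable (fun U => ((d:ℝ)+1)^2 * (xx k l U * (xx k i U * xx k j U))
        + (((d:ℝ)+1)*B) * (xx k l U * xx k i U)) μ :=
      ((((nice_xx k l).mul ((nice_xx k i).mul (nice_xx k j))).integrable μ).const_mul _).add
        ((((nice_xx k l).mul (nice_xx k i)).integrable μ).const_mul _)
    have hC : Integrable (fun U => ((d:ℝ)+1)^2 * (xx k l U * (xx k i U * xx k j U))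
        + (((d:ℝ)+1)*B) * (xx k l U * xx k i U)
        + (((d:ℝ)+1)*B) * (xx k l U * xx k j U)) μ :=
      hA.add ((((nice_xx k l).mul (nice_xx k j)).integrable μ).const_mul _)
    have h1 : Integrable (fun U => ((d:ℝ)+1)^2 * (xx k l U * (xx k i U * xx k j U))
        + (((d:ℝ)+1)*B) * (xx k l U * xx k i U)
        + (((d:ℝ)+1)*B) * (xx k l U * xx k j U) + B^2 * xx k l U) μ :=
      hC.add (((nice_xx k l).integrable μ).const_mul _)
    exact h1.const_mul _
  have hintl : ∀ l ∈ (Finset.univ : Finset (Fin d)),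
      Integrable (fun U => if (l:ℕ) < r then F l U else 0) μ := by
    intro l _
    by_cases h : (l:ℕ) < r
    · simp only [if_pos h]; exact hbase l
    · simp only [if_neg h]; exact integrable_zero _ _ _
  rw [int_congr μ hpt, integral_finset_sum Finset.univ hintl]
  have hpull : ∀ l ∈ (Finset.univ : Finset (Fin d)),
      ∫ U, (if (l:ℕ) < r then F l U else 0) ∂μ
        = if (l:ℕ) < r then ∫ U, F l U ∂μ else 0 := by
    intro l _
    by_cases h : (l:ℕ) < r
    · simp only [if_pos h]
    · simp only [if_neg h, integral_zero]
  rw [Finset.sum_congr rfl hpull, ← Finset.sum_filter]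
  have hcomb : ∀ l : Fin d, ∫ U, F l U ∂μ = (r:ℝ)⁻¹ *
      (((d:ℝ)+1)^2 * (∫ U, xx k l U * (xx k i U * xx k j U) ∂μ)
        + (((d:ℝ)+1)*B) * (∫ U, xx k l U * xx k i U ∂μ)
        + (((d:ℝ)+1)*B) * (∫ U, xx k l U * xx k j U ∂μ)
        + B^2 * ∫ U, xx k l U ∂μ) := by
    intro l
    simp only [hF]
    rw [integral_const_mul, int_comb4 μ ((nice_xx k l).mul ((nice_xx k i).mul (nice_xx k j)))
      ((nice_xx k l).mul (nice_xx k i)) ((nice_xx k l).mul (nice_xx k j)) (nice_xx k l)]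
  have hVi : ∫ U, F i U ∂μ = (r:ℝ)⁻¹ *
      (((d:ℝ)+1)^2 * (2/((d:ℝ)*((d:ℝ)+1)*((d:ℝ)+2)))
        + (((d:ℝ)+1)*B) * (2/((d:ℝ)*((d:ℝ)+1)))
        + (((d:ℝ)+1)*B) * (1/((d:ℝ)*((d:ℝ)+1))) + B^2 * (1/(d:ℝ))) := by
    rw [hcomb i, int_x3_aab μ hμ hd k hij, int_xx_diag μ hμ hd k i,
      int_xx_off μ hμ hd k hij, int_x μ hμ hd k i]
  have hVj : ∫ U, F j U ∂μ = (r:ℝ)⁻¹ *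
      (((d:ℝ)+1)^2 * (2/((d:ℝ)*((d:ℝ)+1)*((d:ℝ)+2)))
        + (((d:ℝ)+1)*B) * (1/((d:ℝ)*((d:ℝ)+1)))
        + (((d:ℝ)+1)*B) * (2/((d:ℝ)*((d:ℝ)+1))) + B^2 * (1/(d:ℝ))) := by
    rw [hcomb j,
      int_congr μ (f := fun U => xx k j U * (xx k i U * xx k j U))
        (g := fun U => xx k j U * (xx k j U * xx k i U)) (fun U => by ring),
      int_x3_aab μ hμ hd k (Ne.symm hij), int_xx_off μ hμ hd k (Ne.symm hij),
      int_xx_diag μ hμ hd k j, int_x μ hμ hd k j]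
  have hVo : ∀ l : Fin d, l ≠ i → l ≠ j → ∫ U, F l U ∂μ = (r:ℝ)⁻¹ *
      (((d:ℝ)+1)^2 * (1/((d:ℝ)*((d:ℝ)+1)*((d:ℝ)+2)))
        + (((d:ℝ)+1)*B) * (1/((d:ℝ)*((d:ℝ)+1)))
        + (((d:ℝ)+1)*B) * (1/((d:ℝ)*((d:ℝ)+1))) + B^2 * (1/(d:ℝ))) := by
    intro l hli hlj
    rw [hcomb l, int_x3_abc μ hμ hd k hli hlj hij, int_xx_off μ hμ hd k hli,
      int_xx_off μ hμ hd k hlj, int_x μ hμ hd k l]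
  have hiS : i ∈ Finset.univ.filter (fun l : Fin d => (l:ℕ) < r) :=
    Finset.mem_filter.mpr ⟨Finset.mem_univ _, hi⟩
  have hjS : j ∈ (Finset.univ.filter (fun l : Fin d => (l:ℕ) < r)).erase i :=
    Finset.mem_erase.mpr ⟨Ne.symm hij, Finset.mem_filter.mpr ⟨Finset.mem_univ _, hj⟩⟩
  rw [← Finset.add_sum_erase _ _ hiS, ← Finset.add_sum_erase _ _ hjS, hVi, hVj,
    Finset.sum_congr rfl (fun l hl => hVo l
      (Finset.mem_erase.mp (Finset.mem_erase.mp hl).2).1 (Finset.mem_erase.mp hl).1),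
    Finset.sum_const, Finset.card_erase_of_mem hjS, Finset.card_erase_of_mem hiS,
    card_filter_lt hrd, nsmul_eq_mul]
  have hcast : ((r - 1 - 1 : ℕ) : ℝ) = (r:ℝ) - 2 := by
    have : r - 1 - 1 = r - 2 := by omega
    rw [this, Nat.cast_sub (by omega)]
    simp
  rw [hcast, hB]
  have h2 : (d:ℝ) + 2 ≠ 0 := by positivity
  have h1 : (d:ℝ) + 1 ≠ 0 := by positivity
  field_simp
  ring

end Integrals
end CovAux

open CovAux in
/-- Diagonal variance and covariance of the `A` block of the
covariant-measurement LS estimator for `ρ_r`: for `1 ≤ i ≤ r`,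
`d·∫ ⟨e_k, U*ρ_r U e_k⟩·((d+1)|U_{ik}|² − 1 − 1/r)² dU = 2((r+2)/r)((d+1)/(d+2)) − (1+1/r)²`,
and for distinct `1 ≤ i, j ≤ r` (when `r ≥ 2`),
`d·∫ ⟨e_k, U*ρ_r U e_k⟩·((d+1)|U_{ik}|² − 1 − 1/r)((d+1)|U_{jk}|² − 1 − 1/r) dU
  = ((r+2)/r)((d+1)/(d+2)) − (1+1/r)²`. -/
theorem covariant_ls_A_diagonal_variance_covariance
    (d r : ℕ) (hd : 2 ≤ d) (hr : 1 ≤ r) (hrd : r ≤ d)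
    (μ : Measure (Matrix.unitaryGroup (Fin d) ℂ)) [IsProbabilityMeasure μ]
    (hμ : ∀ V : Matrix.unitaryGroup (Fin d) ℂ, μ.map (fun U => V * U) = μ)
    (k : Fin d) :
    (∀ i : Fin d, (i : ℕ) < r →
      (d : ℝ) * ∫ U,
          ((star (U : Matrix (Fin d) (Fin d) ℂ) * rhoR d r * (U : Matrix (Fin d) (Fin d) ℂ)) k k).re *
          (((d : ℝ) + 1) * ‖(U : Matrix (Fin d) (Fin d) ℂ) i k‖ ^ 2 - 1 - 1 / (r : ℝ)) ^ 2 ∂μ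
        = 2 * (((r : ℝ) + 2) / (r : ℝ)) * (((d : ℝ) + 1) / ((d : ℝ) + 2)) - (1 + 1 / (r : ℝ)) ^ 2) ∧
    (2 ≤ r → ∀ i j : Fin d, i ≠ j → (i : ℕ) < r → (j : ℕ) < r →
      (d : ℝ) * ∫ U,
          ((star (U : Matrix (Fin d) (Fin d) ℂ) * rhoR d r * (U : Matrix (Fin d) (Fin d) ℂ)) k k).re *
          ((((d : ℝ) + 1) * ‖(U : Matrix (Fin d) (Fin d) ℂ) i k‖ ^ 2 - 1 - 1 / (r : ℝ)) *
            (((d : ℝ) + 1) * ‖(U : Matrix (Fin d) (Fin d) ℂ) j k‖ ^ 2 - 1 - 1 / (r : ℝ))) ∂μ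
        = (((r : ℝ) + 2) / (r : ℝ)) * (((d : ℝ) + 1) / ((d : ℝ) + 2)) - (1 + 1 / (r : ℝ)) ^ 2) := by
  constructor
  · intro i hi
    have h := CovAux.final_int1 μ hμ hd hr hrd k i hi
    rw [← h]
    congr 1
    refine CovAux.int_congr μ fun U => ?_
    rw [CovAux.rho_re r k U]
    rfl
  · intro hr2 i j hij hi hj
    have h := CovAux.final_int2 μ hμ hd hr2 hrd k i j hij hi hj
    rw [← h]
    congr 1
    refine CovAux.int_congr μ fun U => ?_
    rw [CovAux.rho_re r k U]
    rfl
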